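/- Let a > b > 0, p² = a²+b², r² = a²−b², and let s, τ, σ, χ, e be real numbers with s ≠ 0, σ = τ² − 2p²τ + r⁴, 4s²χ² = σ + 4s²τ, χ ≥ 0, e² = σ. Consider the degree-6 polynomial Q(w) = (w² − 1)(σw² − 4s²χ²)[(e·w + τ)² − r⁴]. If there exists a complex number w₀ with Q(w₀) = 0 and Q'(w₀) = 0 (i.e., Q has a multiple root), then s·τ·σ·χ·(a² − s²)·(b² − s²) = 0. -/

import Mathlib

/-- If the degree-6 polynomial `Q(w) = (w² - 1)(σw² - 4s²χ²)[(e·w + τ)² - r⁴]` has a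
multiple root in `ℂ`, then `s·τ·σ·χ·(a² - s²)(b² - s²) = 0`. -/
theorem stmt_18
    (a b s τ σ χ e : ℝ) (hab : b < a) (hb : 0 < b) (hs : s ≠ 0)
    (hσ : σ = τ ^ 2 - 2 * (a ^ 2 + b ^ 2) * τ + (a ^ 2 - b ^ 2) ^ 2)
    (hχ : 4 * s ^ 2 * χ ^ 2 = σ + 4 * s ^ 2 * τ) (hχ0 : 0 ≤ χ)
    (he : e ^ 2 = σ)
    (Q : ℂ → ℂ)
    (hQ : Q = fun w => (w ^ 2 - 1) * ((σ : ℂ) * w ^ 2 - 4 * (s : ℂ) ^ 2 * (χ : ℂ) ^ 2) *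
      (((e : ℂ) * w + (τ : ℂ)) ^ 2 - ((a ^ 2 - b ^ 2 : ℝ) : ℂ) ^ 2))
    (hmult : ∃ w₀ : ℂ, Q w₀ = 0 ∧ deriv Q w₀ = 0) :
    s * τ * σ * χ * (a ^ 2 - s ^ 2) * (b ^ 2 - s ^ 2) = 0 := by
  by_contra hcon
  simp only [mul_eq_zero, not_or] at hcon
  obtain ⟨⟨⟨⟨⟨hs', hτ⟩, hσ0⟩, hχ0'⟩, hA2⟩, hB2⟩ := hcon
  have ha : (0 : ℝ) < a := hb.trans hab
  have he0 : e ≠ 0 := fun h0 => hσ0 (by rw [← he, h0]; ring)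
  have heC0 : (e : ℂ) ≠ 0 := Complex.ofReal_ne_zero.mpr he0
  have hσC : (σ : ℂ) ≠ 0 := Complex.ofReal_ne_zero.mpr hσ0
  have heC : (e : ℂ) ^ 2 = (σ : ℂ) := by exact_mod_cast he
  have hcast : ((a ^ 2 - b ^ 2 : ℝ) : ℂ) = (a : ℂ) ^ 2 - (b : ℂ) ^ 2 := by push_cast; ring
  obtain ⟨w₀, hQ0, hQ'0⟩ := hmult
  subst hQ
  -- Derivative computation
  have hAd : HasDerivAt (fun w : ℂ => w ^ 2 - 1) (2 * w₀) w₀ := by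
    simpa only [Nat.cast_ofNat, Nat.reduceSub, pow_one] using (hasDerivAt_pow 2 w₀).sub_const 1
  have hBd : HasDerivAt (fun w : ℂ => (σ : ℂ) * w ^ 2 - 4 * (s : ℂ) ^ 2 * (χ : ℂ) ^ 2)
      ((σ : ℂ) * (2 * w₀)) w₀ := by
    simpa only [Nat.cast_ofNat, Nat.reduceSub, pow_one] using
      ((hasDerivAt_pow 2 w₀).const_mul (σ : ℂ)).sub_const (4 * (s : ℂ) ^ 2 * (χ : ℂ) ^ 2)
  have hCd : HasDerivAt
      (fun w : ℂ => ((e : ℂ) * w + (τ : ℂ)) ^ 2 - ((a ^ 2 - b ^ 2 : ℝ) : ℂ) ^ 2)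
      (2 * ((e : ℂ) * w₀ + (τ : ℂ)) * (e : ℂ)) w₀ := by
    have h1 : HasDerivAt (fun w : ℂ => (e : ℂ) * w + (τ : ℂ)) (e : ℂ) w₀ := by
      simpa only [mul_one, id] using ((hasDerivAt_id w₀).const_mul (e : ℂ)).add_const (τ : ℂ)
    simpa only [Nat.cast_ofNat, Nat.reduceSub, pow_one, Pi.pow_apply] using
      (h1.pow 2).sub_const (((a ^ 2 - b ^ 2 : ℝ) : ℂ) ^ 2)
  have hQd := (hAd.mul hBd).mul hCd
  have hD0 : (2 * w₀ * ((σ : ℂ) * w₀ ^ 2 - 4 * (s : ℂ) ^ 2 * (χ : ℂ) ^ 2)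
        + (w₀ ^ 2 - 1) * ((σ : ℂ) * (2 * w₀)))
        * (((e : ℂ) * w₀ + (τ : ℂ)) ^ 2 - ((a ^ 2 - b ^ 2 : ℝ) : ℂ) ^ 2)
      + (w₀ ^ 2 - 1) * ((σ : ℂ) * w₀ ^ 2 - 4 * (s : ℂ) ^ 2 * (χ : ℂ) ^ 2)
        * (2 * ((e : ℂ) * w₀ + (τ : ℂ)) * (e : ℂ)) = 0 := by
    rw [← hQ'0]; exact hQd.deriv.symm
  have hQ0' : (w₀ ^ 2 - 1) * ((σ : ℂ) * w₀ ^ 2 - 4 * (s : ℂ) ^ 2 * (χ : ℂ) ^ 2) *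
      (((e : ℂ) * w₀ + (τ : ℂ)) ^ 2 - ((a ^ 2 - b ^ 2 : ℝ) : ℂ) ^ 2) = 0 := hQ0
  set A := w₀ ^ 2 - 1 with hAdef
  set B := (σ : ℂ) * w₀ ^ 2 - 4 * (s : ℂ) ^ 2 * (χ : ℂ) ^ 2 with hBdef
  set C := ((e : ℂ) * w₀ + (τ : ℂ)) ^ 2 - ((a ^ 2 - b ^ 2 : ℝ) : ℂ) ^ 2 with hCdef
  by_cases hAz : A = 0 <;> by_cases hBz : B = 0 <;> by_cases hCz : C = 0
  -- Case 1: A = 0, B = 0 (C anything): forces τ = 0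
  -- Case 1a
  · have hre : ((σ - 4 * s ^ 2 * χ ^ 2 : ℝ) : ℂ) = 0 := by
      push_cast
      linear_combination hBz - hBdef - (σ : ℂ) * hAz + (σ : ℂ) * hAdef
    have hre' : σ - 4 * s ^ 2 * χ ^ 2 = 0 := by exact_mod_cast hre
    have hst : s ^ 2 * τ = 0 := by linarith
    exact hτ ((mul_eq_zero.mp hst).resolve_left (pow_ne_zero 2 hs))
  -- Case 1b
  · have hre : ((σ - 4 * s ^ 2 * χ ^ 2 : ℝ) : ℂ) = 0 := by
      push_cast
      linear_combination hBz - hBdef - (σ : ℂ) * hAz + (σ : ℂ) * hAdef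
    have hre' : σ - 4 * s ^ 2 * χ ^ 2 = 0 := by exact_mod_cast hre
    have hst : s ^ 2 * τ = 0 := by linarith
    exact hτ ((mul_eq_zero.mp hst).resolve_left (pow_ne_zero 2 hs))
  -- Case 2: A = 0, B ≠ 0, C = 0
  · have hw : (w₀ - 1) * (w₀ + 1) = 0 := by linear_combination hAz - hAdef
    have hfin : (a ^ 2 + b ^ 2) ^ 2 = (a ^ 2 - b ^ 2) ^ 2 := by
      rcases mul_eq_zero.mp hw with h1 | h1
      · have hw1 : w₀ = 1 := by linear_combination h1
        rw [hw1] at hCdef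
        have hre : (((e + τ) ^ 2 - (a ^ 2 - b ^ 2) ^ 2 : ℝ) : ℂ) = 0 := by
          push_cast
          linear_combination hCz - hCdef + (((a ^ 2 - b ^ 2 : ℝ) : ℂ) + (a : ℂ) ^ 2 - (b : ℂ) ^ 2) * hcast
        have hre' : (e + τ) ^ 2 - (a ^ 2 - b ^ 2) ^ 2 = 0 := by exact_mod_cast hre
        have h2 : (e - ((a ^ 2 + b ^ 2) - τ)) * τ = 0 := by
          linear_combination (hre' - he - hσ) / 2
        have hzr : e - ((a ^ 2 + b ^ 2) - τ) = 0 := (mul_eq_zero.mp h2).resolve_right hτ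
        linear_combination he + hσ - (e + (a ^ 2 + b ^ 2) - τ) * hzr
      · have hw1 : w₀ = -1 := by linear_combination h1
        rw [hw1] at hCdef
        have hre : (((-e + τ) ^ 2 - (a ^ 2 - b ^ 2) ^ 2 : ℝ) : ℂ) = 0 := by
          push_cast
          linear_combination hCz - hCdef + (((a ^ 2 - b ^ 2 : ℝ) : ℂ) + (a : ℂ) ^ 2 - (b : ℂ) ^ 2) * hcast
        have hre' : (-e + τ) ^ 2 - (a ^ 2 - b ^ 2) ^ 2 = 0 := by exact_mod_cast hre
        have h2 : (e + ((a ^ 2 + b ^ 2) - τ)) * τ = 0 := by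
          linear_combination (-hre' + he + hσ) / 2
        have hzr : e + ((a ^ 2 + b ^ 2) - τ) = 0 := (mul_eq_zero.mp h2).resolve_right hτ
        linear_combination he + hσ + ((a ^ 2 + b ^ 2) - τ - e) * hzr
    have hab4 : 4 * (a * b) ^ 2 = 0 := by linear_combination hfin
    nlinarith [mul_pos ha hb]
  -- Case 3: A = 0 only
  · have hw : 2 * w₀ * B * C = 0 := by
      linear_combination hD0 -
        ((σ : ℂ) * (2 * w₀) * C + B * (2 * ((e : ℂ) * w₀ + (τ : ℂ)) * (e : ℂ))) * hAz
    rcases mul_eq_zero.mp hw with h1 | h1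
    · rcases mul_eq_zero.mp h1 with h2 | h2
      · have hw0 : w₀ = 0 := by simpa using h2
        have : (1 : ℂ) = 0 := by linear_combination hAdef - hAz + w₀ * hw0
        exact one_ne_zero this
      · exact hBz h2
    · exact hCz h1
  -- Case 4: B = 0, C = 0 (A ≠ 0)
  · have hz : ((e : ℂ) * w₀ - 2 * (s : ℂ) * (χ : ℂ)) * ((e : ℂ) * w₀ + 2 * (s : ℂ) * (χ : ℂ))
        = 0 := by
      linear_combination hBz - hBdef + w₀ ^ 2 * heC
    have hfin : (a ^ 2 - s ^ 2) * (b ^ 2 - s ^ 2) = 0 := by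
      rcases mul_eq_zero.mp hz with h1 | h1
      · have hre : (((2 * s * χ + τ) ^ 2 - (a ^ 2 - b ^ 2) ^ 2 : ℝ) : ℂ) = 0 := by
          push_cast
          linear_combination hCz - hCdef -
            (2 * (s : ℂ) * (χ : ℂ) + (e : ℂ) * w₀ + 2 * (τ : ℂ)) * h1 + (((a ^ 2 - b ^ 2 : ℝ) : ℂ) + (a : ℂ) ^ 2 - (b : ℂ) ^ 2) * hcast
        have hre' : (2 * s * χ + τ) ^ 2 - (a ^ 2 - b ^ 2) ^ 2 = 0 := by exact_mod_cast hre
        have h2 : (2 * s * χ - ((a ^ 2 + b ^ 2) - τ - 2 * s ^ 2)) * τ = 0 := by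
          linear_combination (hre' - hχ - hσ) / 2
        have hzr : 2 * s * χ - ((a ^ 2 + b ^ 2) - τ - 2 * s ^ 2) = 0 :=
          (mul_eq_zero.mp h2).resolve_right hτ
        have hsq : 4 * s ^ 2 * χ ^ 2 = ((a ^ 2 + b ^ 2) - τ - 2 * s ^ 2) ^ 2 := by
          linear_combination (2 * s * χ + ((a ^ 2 + b ^ 2) - τ - 2 * s ^ 2)) * hzr
        linear_combination (-hsq + hχ + hσ) / 4
      · have hre : (((-(2 * s * χ) + τ) ^ 2 - (a ^ 2 - b ^ 2) ^ 2 : ℝ) : ℂ) = 0 := by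
          push_cast
          linear_combination hCz - hCdef -
            ((e : ℂ) * w₀ - 2 * (s : ℂ) * (χ : ℂ) + 2 * (τ : ℂ)) * h1 + (((a ^ 2 - b ^ 2 : ℝ) : ℂ) + (a : ℂ) ^ 2 - (b : ℂ) ^ 2) * hcast
        have hre' : (-(2 * s * χ) + τ) ^ 2 - (a ^ 2 - b ^ 2) ^ 2 = 0 := by exact_mod_cast hre
        have h2 : (2 * s * χ + ((a ^ 2 + b ^ 2) - τ - 2 * s ^ 2)) * τ = 0 := by
          linear_combination (-hre' + hχ + hσ) / 2
        have hzr : 2 * s * χ + ((a ^ 2 + b ^ 2) - τ - 2 * s ^ 2) = 0 :=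
          (mul_eq_zero.mp h2).resolve_right hτ
        have hsq : 4 * s ^ 2 * χ ^ 2 = ((a ^ 2 + b ^ 2) - τ - 2 * s ^ 2) ^ 2 := by
          linear_combination (2 * s * χ - ((a ^ 2 + b ^ 2) - τ - 2 * s ^ 2)) * hzr
        linear_combination (-hsq + hχ + hσ) / 4
    rcases mul_eq_zero.mp hfin with h | h
    · exact hA2 h
    · exact hB2 h
  -- Case 5: B = 0 only
  · have hw : A * ((σ : ℂ) * (2 * w₀)) * C = 0 := by
      linear_combination hD0 -
        (2 * w₀ * C + A * (2 * ((e : ℂ) * w₀ + (τ : ℂ)) * (e : ℂ))) * hBz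
    rcases mul_eq_zero.mp hw with h1 | h1
    · rcases mul_eq_zero.mp h1 with h2 | h2
      · exact hAz h2
      · have hw0 : w₀ = 0 := by
          rcases mul_eq_zero.mp h2 with h3 | h3
          · exact absurd h3 hσC
          · simpa using h3
        have hre : ((4 * s ^ 2 * χ ^ 2 : ℝ) : ℂ) = 0 := by
          push_cast
          linear_combination hBdef - hBz + (σ : ℂ) * w₀ * hw0
        have hre' : 4 * s ^ 2 * χ ^ 2 = 0 := by exact_mod_cast hre
        have : (4 : ℝ) * s ^ 2 * χ ^ 2 ≠ 0 := by positivity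
        exact this hre'
    · exact hCz h1
  -- Case 6: C = 0 only
  · have hw : A * B * (2 * ((e : ℂ) * w₀ + (τ : ℂ)) * (e : ℂ)) = 0 := by
      linear_combination hD0 - (2 * w₀ * B + A * ((σ : ℂ) * (2 * w₀))) * hCz
    rcases mul_eq_zero.mp hw with h1 | h1
    · exact (mul_ne_zero hAz hBz) h1
    · have hz : (e : ℂ) * w₀ + (τ : ℂ) = 0 := by
        rcases mul_eq_zero.mp h1 with h3 | h3
        · simpa using h3
        · exact absurd h3 heC0
      have hr0 : ((a ^ 2 - b ^ 2 : ℝ) : ℂ) ^ 2 = 0 := by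
        linear_combination hCdef - hCz + ((e : ℂ) * w₀ + (τ : ℂ)) * hz
      have hr1 : ((a ^ 2 - b ^ 2 : ℝ) : ℂ) = 0 := by
        exact pow_eq_zero_iff (by norm_num) |>.mp hr0
      have hr2 : a ^ 2 - b ^ 2 = 0 := by exact_mod_cast hr1
      nlinarith
  -- Case 7: no factor vanishes: contradicts Q w₀ = 0
  · exact (mul_ne_zero (mul_ne_zero hAz hBz) hCz) hQ0'
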